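/- Let p ≥ 2, let f : ℝ^d → ℝ be convex and differentiable, attaining its minimum f* at x*, with R = sup{ ‖x − x*‖ : f(x) ≤ f(X_0) } finite. Let X : [0, ∞) → ℝ^d be a differentiable curve satisfying the rescaled gradient flow Ẋ_t = −∇f(X_t)/‖∇f(X_t)‖^{(p−2)/(p−1)} whenever ∇f(X_t) ≠ 0, and suppose f(X_t) > f* for all t in an interval. Then on that interval the energy functional E_t = (f(X_t) − f*)^{−1/(p−1)} is differentiable and satisfies Ė_t ≥ 1/((p−1) · R^{p/(p−1)}). -/

import Mathlib

open scoped RealInnerProductSpace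
open Real Set

noncomputable section

-- convexity gradient inequality
lemma grad_conv_ineq {d : ℕ} {f : EuclideanSpace ℝ (Fin d) → ℝ}
    (hconv : ConvexOn ℝ Set.univ f) (hdiff : Differentiable ℝ f)
    (x y : EuclideanSpace ℝ (Fin d)) :
    f x - f y ≤ ⟪gradient f x, x - y⟫ := by
  set g : ℝ → ℝ := fun s : ℝ => f (s • (y - x) + x) with hg
  have hc : ∀ s : ℝ, HasDerivAt (fun s : ℝ => s • (y - x) + x) (y - x) s := by
    intro s
    simpa using ((hasDerivAt_id s).smul_const (y - x)).add_const x
  have h0 : HasDerivAt g ⟪gradient f x, y - x⟫ 0 := by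
    have hf : HasFDerivAt f (InnerProductSpace.toDual ℝ _ (gradient f x))
        ((fun s : ℝ => s • (y - x) + x) 0) := by
      simpa using (hdiff x).hasFDerivAt
    simpa [Function.comp_def, hg] using hf.comp_hasDerivAt 0 (hc 0)
  have hcomp : ConvexOn ℝ Set.univ g := by
    have := hconv.comp_affineMap (AffineMap.lineMap x y)
    simp only [Set.preimage_univ] at this
    have hgeq : g = f ∘ (AffineMap.lineMap x y) := by
      funext s
      simp only [hg, Function.comp_apply, AffineMap.lineMap_apply_module]
      congr 1
      rw [smul_sub, sub_smul, one_smul]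
      abel
    rw [hgeq]
    exact this
  have hle := hcomp.le_slope_of_hasDerivAt (Set.mem_univ (0:ℝ)) (Set.mem_univ (1:ℝ)) one_pos h0
  have hslope : slope g 0 1 = f y - f x := by
    simp [slope_def_field, hg]
  rw [hslope] at hle
  have : ⟪gradient f x, x - y⟫ = -⟪gradient f x, y - x⟫ := by
    rw [← inner_neg_right]; congr 1; abel
  rw [this]; linarith

theorem rescaled_gradient_flow_energy_increase
    (d : ℕ) (p : ℝ) (hp : 2 ≤ p)
    (f : EuclideanSpace ℝ (Fin d) → ℝ)
    (hconv : ConvexOn ℝ Set.univ f) (hdiff : Differentiable ℝ f)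
    (xstar : EuclideanSpace ℝ (Fin d)) (hmin : ∀ x, f xstar ≤ f x)
    (X X' : ℝ → EuclideanSpace ℝ (Fin d))
    (hX : ∀ t ≥ (0 : ℝ), HasDerivAt X (X' t) t)
    (hflow : ∀ t ≥ (0 : ℝ), gradient f (X t) ≠ 0 →
      X' t = -(1 / ‖gradient f (X t)‖ ^ ((p - 2) / (p - 1))) • gradient f (X t))
    (R : ℝ)
    (hR : R = sSup {r : ℝ | ∃ y, f y ≤ f (X 0) ∧ r = ‖y - xstar‖})
    (hRfin : Bornology.IsBounded {y : EuclideanSpace ℝ (Fin d) | f y ≤ f (X 0)})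
    (s : Set ℝ) (hs : s ⊆ Set.Ioi 0) (hs' : OrdConnected s)
    (hpos : ∀ t ∈ s, f xstar < f (X t)) :
    ∀ t ∈ s, ∃ E' : ℝ,
      HasDerivAt (fun u : ℝ => (f (X u) - f xstar) ^ (-(1 / (p - 1)))) E' t ∧
        1 / ((p - 1) * R ^ (p / (p - 1))) ≤ E' := by
  have hp1 : (1:ℝ) < p - 1 + 1 := by linarith
  have hp1' : (0:ℝ) < p - 1 := by linarith
  intro t ht
  have htpos : (0:ℝ) < t := hs ht
  -- derivative of f ∘ X
  have hfX : ∀ u ≥ (0:ℝ), HasDerivAt (fun v => f (X v)) ⟪gradient f (X u), X' u⟫ u := by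
    intro u hu
    simpa [Function.comp_def] using ((hdiff (X u)).hasGradientAt.hasFDerivAt.comp_hasDerivAt u (hX u hu))
  -- derivative nonpositive
  have hDnonpos : ∀ u ≥ (0:ℝ), ⟪gradient f (X u), X' u⟫ ≤ 0 := by
    intro u hu
    by_cases hg : gradient f (X u) = 0
    · simp [hg]
    · rw [hflow u hu hg, real_inner_smul_right, real_inner_self_eq_norm_sq]
      have h1 : (0:ℝ) ≤ 1 / ‖gradient f (X u)‖ ^ ((p - 2) / (p - 1)) := by positivity
      nlinarith [sq_nonneg ‖gradient f (X u)‖]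
  -- f (X t) ≤ f (X 0)
  have hmono : f (X t) ≤ f (X 0) := by
    have hanti : AntitoneOn (fun v => f (X v)) (Set.Icc 0 t) := by
      apply antitoneOn_of_deriv_nonpos (convex_Icc 0 t)
      · intro u hu
        exact (hfX u hu.1).continuousAt.continuousWithinAt
      · intro u hu
        rw [interior_Icc] at hu
        exact (hfX u hu.1.le).differentiableAt.differentiableWithinAt
      · intro u hu
        rw [interior_Icc] at hu
        rw [(hfX u hu.1.le).deriv]
        exact hDnonpos u hu.1.le
    exact hanti (Set.left_mem_Icc.2 htpos.le) (Set.mem_Icc.2 ⟨le_refl 0 |>.trans htpos.le, le_refl t⟩) htpos.le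
  -- norm bound
  have hXtR : ‖X t - xstar‖ ≤ R := by
    obtain ⟨C, hC⟩ := hRfin.exists_norm_le
    have hbdd : BddAbove {r : ℝ | ∃ y, f y ≤ f (X 0) ∧ r = ‖y - xstar‖} := by
      refine ⟨C + ‖xstar‖, ?_⟩
      rintro r ⟨y, hy, rfl⟩
      calc ‖y - xstar‖ ≤ ‖y‖ + ‖xstar‖ := norm_sub_le _ _
        _ ≤ C + ‖xstar‖ := by have := hC y hy; linarith
    rw [hR]
    exact le_csSup hbdd ⟨X t, hmono, rfl⟩
  set g := gradient f (X t) with hgdef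
  set A := f (X t) - f xstar with hA
  have hApos : (0:ℝ) < A := sub_pos.2 (hpos t ht)
  -- gradient nonzero
  have hkey : A ≤ ⟪g, X t - xstar⟫ := grad_conv_ineq hconv hdiff (X t) xstar
  have hgne : g ≠ 0 := by
    intro h
    rw [h] at hkey
    simp at hkey
    linarith
  have hgpos : (0:ℝ) < ‖g‖ := norm_pos_iff.2 hgne
  have hXtpos : (0:ℝ) < ‖X t - xstar‖ := by
    rcases le_or_gt ‖X t - xstar‖ 0 with h | h
    · exfalso
      have : X t - xstar = 0 := by
        have := norm_nonneg (X t - xstar); exact norm_eq_zero.1 (le_antisymm h this)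
      have hxeq : X t = xstar := by rwa [sub_eq_zero] at this
      have := hpos t ht; rw [hxeq] at this; exact lt_irrefl _ this
    · exact h
  have hRpos : (0:ℝ) < R := lt_of_lt_of_le hXtpos hXtR
  -- A ≤ ‖g‖ * R
  have hAgR : A ≤ ‖g‖ * R := by
    calc A ≤ ⟪g, X t - xstar⟫ := hkey
      _ ≤ ‖g‖ * ‖X t - xstar‖ := real_inner_le_norm _ _
      _ ≤ ‖g‖ * R := by nlinarith
  set q : ℝ := p / (p - 1) with hq
  have hqpos : (0:ℝ) < q := by positivity
  -- derivative value of f∘X at t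
  have hDval : ⟪g, X' t⟫ = -‖g‖ ^ q := by
    rw [hgdef, hflow t htpos.le (hgdef ▸ hgne), real_inner_smul_right,
      real_inner_self_eq_norm_sq]
    rw [← hgdef]
    have h2 : ‖g‖ ^ (2:ℕ) = ‖g‖ ^ (2:ℝ) := by
      rw [← Real.rpow_natCast ‖g‖ 2]; norm_num
    rw [h2]
    rw [show -(1 / ‖g‖ ^ ((p - 2) / (p - 1))) * ‖g‖ ^ (2:ℝ) =
      -(‖g‖ ^ (2:ℝ) / ‖g‖ ^ ((p - 2) / (p - 1))) from by ring]
    rw [← Real.rpow_sub hgpos]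
    congr 1
    rw [hq]
    have hne : p - 1 ≠ 0 := hp1'.ne'
    field_simp
    ring
  -- the energy derivative
  have hE : HasDerivAt (fun u : ℝ => (f (X u) - f xstar) ^ (-(1 / (p - 1))))
      (⟪g, X' t⟫ * (-(1 / (p - 1))) * A ^ (-(1 / (p - 1)) - 1)) t := by
    have h1 : HasDerivAt (fun u : ℝ => f (X u) - f xstar) ⟪g, X' t⟫ t :=
      (hfX t htpos.le).sub_const _
    exact h1.rpow_const (Or.inl (ne_of_gt hApos))
  refine ⟨_, hE, ?_⟩
  -- compute and bound
  have hexp : -(1 / (p - 1)) - 1 = -q := by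
    rw [hq]
    field_simp
    ring
  rw [hDval, hexp]
  have hval : -‖g‖ ^ q * (-(1 / (p - 1))) * A ^ (-q) = ‖g‖ ^ q / ((p-1) * A ^ q) := by
    rw [Real.rpow_neg hApos.le]
    field_simp
  rw [hval]
  -- A^q ≤ ‖g‖^q * R^q
  have hAq : A ^ q ≤ ‖g‖ ^ q * R ^ q := by
    rw [← Real.mul_rpow hgpos.le hRpos.le]
    exact Real.rpow_le_rpow hApos.le hAgR hqpos.le
  have hAqpos : (0:ℝ) < A ^ q := Real.rpow_pos_of_pos hApos q
  have hRqpos : (0:ℝ) < R ^ q := Real.rpow_pos_of_pos hRpos q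
  have hgqpos : (0:ℝ) < ‖g‖ ^ q := Real.rpow_pos_of_pos hgpos q
  rw [div_le_div_iff₀ (by positivity) (by positivity)]
  nlinarith
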